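/- Let n ≥ 2, let ς′ be any permutation of Fin n having exactly two cycles, one of length n−1 and one of length 1, and let ς″ be any (n−1)-cycle on Fin (n−1). For all positive integers r and s, the number of pairs (π_1, π_2) of permutations of Fin n with π_1 π_2 = ς′ such that π_1 has exactly r cycles, π_2 has exactly s cycles, and the subgroup generated by π_1 and π_2 acts transitively on Fin n, equals (n−1) times the number of pairs (σ_1, σ_2) of permutations of Fin (n−1) with σ_1 σ_2 = ς″ such that σ_1 has exactly r cycles and σ_2 has exactly s cycles. -/

import Mathlib

open Finset

/-- The setoid on `Fin n` whose classes are the cycles (orbits) of a permutation. -/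
def cycleSetoid {n : ℕ} (π : Equiv.Perm (Fin n)) : Setoid (Fin n) :=
  ⟨π.SameCycle, ⟨fun x => Equiv.Perm.SameCycle.refl π x,
    fun h => Equiv.Perm.SameCycle.symm h, fun h h' => Equiv.Perm.SameCycle.trans h h'⟩⟩

/-- The set of cycles (orbits) of a permutation of `Fin n`; fixed points count as cycles. -/
def PermCycles {n : ℕ} (π : Equiv.Perm (Fin n)) : Type := Quotient (cycleSetoid π)

/-- The number of cycles (orbits) of a permutation of `Fin n`. -/
noncomputable def cycleCount {n : ℕ} (π : Equiv.Perm (Fin n)) : ℕ := Nat.card (PermCycles π)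

open Equiv Equiv.Perm

set_option linter.unusedSectionVars false
set_option linter.unusedVariables false

section Aux

variable {α β : Type*}

def mySetoid (f : Perm α) : Setoid α :=
  ⟨f.SameCycle, ⟨fun x => Equiv.Perm.SameCycle.refl f x,
    fun h => Equiv.Perm.SameCycle.symm h, fun h h' => Equiv.Perm.SameCycle.trans h h'⟩⟩

noncomputable def ncyc (f : Perm α) : ℕ := Nat.card (Quotient (mySetoid f))

lemma cycleCount_eq_ncyc {n : ℕ} (π : Perm (Fin n)) : cycleCount π = ncyc π := rfl

lemma ncyc_eq_of_equiv (e : α ≃ β) (f : Perm α) (g : Perm β)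
    (h : ∀ x y, f.SameCycle x y ↔ g.SameCycle (e x) (e y)) : ncyc f = ncyc g :=
  Nat.card_congr (Quotient.congr e h)

/-- `permCongr` as a monoid hom. -/
def pcHom (e : α ≃ β) : Perm α →* Perm β where
  toFun := e.permCongr
  map_one' := by ext x; simp
  map_mul' f g := by ext x; simp

lemma pcHom_apply (e : α ≃ β) (f : Perm α) (x : α) : pcHom e f (e x) = e (f x) := by
  simp [pcHom]

lemma pcHom_sameCycle (e : α ≃ β) (f : Perm α) (x y : α) :
    f.SameCycle x y ↔ (pcHom e f).SameCycle (e x) (e y) := by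
  constructor
  · rintro ⟨k, hk⟩
    refine ⟨k, ?_⟩
    rw [← map_zpow]
    simp [pcHom, hk]
  · rintro ⟨k, hk⟩
    rw [← map_zpow] at hk
    simp only [pcHom, MonoidHom.coe_mk, OneHom.coe_mk, permCongr_apply, symm_apply_apply] at hk
    exact ⟨k, e.injective hk⟩

lemma ncyc_pcHom (e : α ≃ β) (f : Perm α) : ncyc (pcHom e f) = ncyc f :=
  (ncyc_eq_of_equiv e f (pcHom e f) (pcHom_sameCycle e f)).symm

lemma pcHom_symm_pcHom (e : α ≃ β) (f : Perm α) : pcHom e.symm (pcHom e f) = f := by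
  ext x; simp [pcHom]

lemma ncyc_inv (f : Perm α) : ncyc f⁻¹ = ncyc f :=
  ncyc_eq_of_equiv (Equiv.refl α) f⁻¹ f (fun x y => by simp [sameCycle_inv])

lemma ncyc_conj (u f : Perm α) : ncyc (u * f * u⁻¹) = ncyc f :=
  (ncyc_eq_of_equiv (u : Equiv.Perm α) f _ (fun x y => by
    rw [sameCycle_conj]; simp)).symm

lemma sameCycle_fix {f : Perm α} {m : α} (hf : f m = m) {y : α} (h : f.SameCycle m y) :
    y = m := by
  obtain ⟨k, hk⟩ := h
  rw [zpow_apply_eq_self_of_apply_eq_self hf] at hk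
  exact hk.symm

lemma ne_iff_of_fix {f : Perm α} {m : α} (hf : f m = m) : ∀ x, f x ≠ m ↔ x ≠ m :=
  fun x => not_congr ⟨fun hx => f.injective (by rw [hx, hf]), fun hx => by rw [hx, hf]⟩

lemma ncyc_fixpoint [Finite α] (f : Perm α) (m : α) (hf : f m = m) :
    ncyc f = ncyc (f.subtypePerm (p := fun x => x ≠ m) (ne_iff_of_fix hf)) + 1 := by
  classical
  set g := f.subtypePerm (p := fun x => x ≠ m) (ne_iff_of_fix hf) with hg
  have key : Quotient (mySetoid f) ≃ Option (Quotient (mySetoid g)) := by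
    refine
      { toFun := Quotient.lift (fun x => if h : x = m then none else some ⟦(⟨x, h⟩ : {x // x ≠ m})⟧) ?_
        invFun := fun o => o.elim ⟦m⟧ (Quotient.lift (fun x => ⟦(x : α)⟧) ?_)
        left_inv := ?_
        right_inv := ?_ }
    · intro x y hxy
      by_cases hx : x = m
      · have hy : y = m := sameCycle_fix hf (hx ▸ hxy)
        simp [hx, hy]
      · have hy : y ≠ m := fun h => hx (sameCycle_fix hf (h ▸ hxy.symm))
        simp only [dif_neg hx, dif_neg hy, Option.some.injEq]
        exact Quotient.sound ((sameCycle_subtypePerm).mpr hxy)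
    · intro x y hxy
      exact Quotient.sound ((sameCycle_subtypePerm).mp hxy)
    · refine Quotient.ind (fun x => ?_)
      by_cases hx : x = m
      · subst hx; simp
      · simp [dif_neg hx]
    · rintro (_ | q)
      · simp
      · induction q using Quotient.ind with
        | _ x => simp [dif_neg x.2]
  rw [ncyc, Nat.card_congr key, Finite.card_option, ncyc]

end Aux

section Swap

variable {α : Type*} [Finite α] [DecidableEq α]

lemma sameCycle_of_swap_mul {f : Perm α} {m a : α} (hfm : f m = a)
    {x y : α} (h : (Equiv.swap m a * f).SameCycle x y) : f.SameCycle x y := by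
  set g := Equiv.swap m a * f with hg
  have step : ∀ z, f.SameCycle z (g z) := by
    intro z
    by_cases h1 : f z = m
    · have hz : g z = f (f z) := by
        rw [hg, Perm.mul_apply, h1, Equiv.swap_apply_left, hfm]
      rw [hz]
      exact ⟨2, by rw [zpow_two, Perm.mul_apply]⟩
    · by_cases h2 : f z = a
      · have hzm : z = m := f.injective (h2.trans hfm.symm)
        have hzz : g z = z := by rw [hg, hzm, Perm.mul_apply, hfm, Equiv.swap_apply_right]
        rw [hzz]
      · have : g z = f z := by
          simp only [hg, Perm.mul_apply]
          exact Equiv.swap_apply_of_ne_of_ne h1 h2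
        rw [this]
        exact ⟨1, by simp⟩
  obtain ⟨k, -, hk⟩ := h.exists_pow_eq'
  subst hk
  clear h
  induction k with
  | zero => simpa using Equiv.Perm.SameCycle.refl f x
  | succ k ih =>
    have : (g ^ (k+1)) x = g ((g ^ k) x) := by rw [pow_succ']; rfl
    rw [this]
    exact ih.trans (step _)

lemma swap_mul_sameCycle {f : Perm α} {m a : α} (hma : a ≠ m) (hfm : f m = a)
    {x y : α} (hx : x ≠ m) (hy : y ≠ m) (h : f.SameCycle x y) :
    (Equiv.swap m a * f).SameCycle x y := by
  set g := Equiv.swap m a * f with hg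
  suffices H : ∀ k : ℕ, ∀ x, x ≠ m → (f ^ k) x = y → g.SameCycle x y by
    obtain ⟨k, -, hk⟩ := h.exists_pow_eq'
    exact H k x hx hk
  intro k
  induction k using Nat.strong_induction_on with
  | _ k ih =>
    intro x hx hk
    match k, hk with
    | 0, hk => exact hk ▸ Equiv.Perm.SameCycle.refl g x
    | (k+1), hk =>
      rw [pow_succ, Perm.mul_apply] at hk
      by_cases hz : f x = m
      · rw [hz] at hk
        match k, hk with
        | 0, hk => exact absurd (by simpa using hk.symm) hy
        | (k'+1), hk =>
          rw [pow_succ, Perm.mul_apply, hfm] at hk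
          have hxa : g.SameCycle x a := ⟨1, by simp [hg, Perm.mul_apply, hz]⟩
          exact hxa.trans (ih k' (by omega) a hma hk)
      · have hfxa : f x ≠ a := fun h2 => hx (f.injective (h2.trans hfm.symm))
        have hgx : g x = f x := by
          simp only [hg, Perm.mul_apply]
          exact Equiv.swap_apply_of_ne_of_ne hz hfxa
        have h1 : g.SameCycle x (f x) := ⟨1, by simp [hgx]⟩
        exact h1.trans (ih k (by omega) (f x) hz hk)

lemma ncyc_swap_mul {f : Perm α} {m a : α} (hma : a ≠ m) (hfm : f m = a) :
    ncyc (Equiv.swap m a * f) = ncyc f + 1 := by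
  set g := Equiv.swap m a * f with hg
  have hgm : g m = m := by rw [hg, Perm.mul_apply, hfm, Equiv.swap_apply_right]
  rw [ncyc_fixpoint g m hgm]
  congr 1
  have wd : ∀ (x y : {x // x ≠ m}),
      (g.subtypePerm (ne_iff_of_fix hgm)).SameCycle x y →
      (⟦(x : α)⟧ : Quotient (mySetoid f)) = ⟦(y : α)⟧ := by
    intro x y hxy
    exact Quotient.sound (sameCycle_of_swap_mul hfm (sameCycle_subtypePerm.mp hxy))
  have hbij : Function.Bijective
      ((Quotient.lift (fun (x : {x // x ≠ m}) => (⟦(x : α)⟧ : Quotient (mySetoid f))) wd :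
        Quotient (mySetoid (g.subtypePerm (ne_iff_of_fix hgm))) → Quotient (mySetoid f))) := by
    constructor
    · refine Quotient.ind fun x => Quotient.ind fun y h => ?_
      refine Quotient.sound (sameCycle_subtypePerm.mpr ?_)
      exact swap_mul_sameCycle hma hfm x.2 y.2 (Quotient.exact h)
    · refine Quotient.ind fun z => ?_
      by_cases hzm : z = m
      · subst hzm
        exact ⟨⟦⟨a, hma⟩⟧, Quotient.sound (Equiv.Perm.SameCycle.symm ⟨1, by simpa using hfm⟩)⟩
      · exact ⟨⟦⟨z, hzm⟩⟧, rfl⟩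
  exact Nat.card_eq_of_bijective _ hbij

lemma ncyc_mul_swap {f : Perm α} {m a : α} (hma : a ≠ m) (hfa : f a = m) :
    ncyc (f * Equiv.swap m a) = ncyc f + 1 := by
  have h2 : f⁻¹ m = a := f.injective (by rw [← Perm.mul_apply, mul_inv_cancel, Perm.one_apply, hfa])
  calc ncyc (f * Equiv.swap m a) = ncyc ((f * Equiv.swap m a)⁻¹) := (ncyc_inv _).symm
    _ = ncyc (Equiv.swap m a * f⁻¹) := by rw [mul_inv_rev, Equiv.swap_inv]
    _ = ncyc f⁻¹ + 1 := ncyc_swap_mul hma h2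
    _ = ncyc f + 1 := by rw [ncyc_inv]

end Swap

section ResExt

variable {n : ℕ} {m : Fin n} (e : {x : Fin n // x ≠ m} ≃ Fin (n - 1))

noncomputable def extP (σ : Perm (Fin (n - 1))) : Perm (Fin n) :=
  ofSubtype (pcHom e.symm σ)

noncomputable def resP (π : Perm (Fin n)) (hπ : π m = m) : Perm (Fin (n - 1)) :=
  pcHom e (π.subtypePerm (ne_iff_of_fix hπ))

lemma extP_fix (σ : Perm (Fin (n - 1))) : extP e σ m = m :=
  ofSubtype_apply_of_not_mem _ (by simp)

lemma extP_mul (σ1 σ2 : Perm (Fin (n - 1))) :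
    extP e (σ1 * σ2) = extP e σ1 * extP e σ2 := by
  simp only [extP, map_mul]

lemma ext_res (π : Perm (Fin n)) (hπ : π m = m) : extP e (resP e π hπ) = π := by
  rw [extP, resP, pcHom_symm_pcHom]
  exact ofSubtype_subtypePerm _ (fun x hne heq => hne (by rw [heq, hπ]))

lemma res_ext (σ : Perm (Fin (n - 1))) : resP e (extP e σ) (extP_fix e σ) = σ := by
  unfold resP extP
  rw [subtypePerm_ofSubtype]
  simpa using pcHom_symm_pcHom e.symm σ

lemma ncyc_extP (σ : Perm (Fin (n - 1))) : ncyc (extP e σ) = ncyc σ + 1 := by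
  rw [ncyc_fixpoint (extP e σ) m (extP_fix e σ)]
  congr 1
  unfold extP
  rw [subtypePerm_ofSubtype]
  simpa using ncyc_pcHom e.symm σ

lemma ncyc_resP (π : Perm (Fin n)) (hπ : π m = m) :
    ncyc π = ncyc (resP e π hπ) + 1 := by
  conv_lhs => rw [← ext_res e π hπ]
  rw [ncyc_extP]

lemma extP_injective : Function.Injective (extP e) := by
  intro σ σ' h
  have h1 := res_ext e σ
  have h2 := res_ext e σ'
  rw [← h1, ← h2]
  simp only [h]

lemma resP_congr {π π' : Perm (Fin n)} (hππ : π = π') (h : π m = m) (h' : π' m = m) :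
    resP e π h = resP e π' h' := by subst hππ; rfl

end ResExt

section Conj

variable {α : Type*} [Fintype α] [DecidableEq α]

lemma sameCycle_all_of_ncyc_one {f : Perm α} (hf : ncyc f = 1) (x y : α) :
    f.SameCycle x y := by
  have : Subsingleton (Quotient (mySetoid f)) := (Nat.card_eq_one_iff_unique.mp hf).1
  exact Quotient.exact (Subsingleton.elim (⟦x⟧ : Quotient (mySetoid f)) ⟦y⟧)

lemma isConj_of_ncyc_one {f g : Perm α} (hf : ncyc f = 1) (hg : ncyc g = 1) :
    IsConj f g := by
  by_cases hcard : Fintype.card α ≤ 1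
  · have : Subsingleton α := Fintype.card_le_one_iff_subsingleton.mp hcard
    have : Subsingleton (Perm α) := inferInstance
    exact (Subsingleton.elim f g) ▸ IsConj.refl f
  · push_neg at hcard
    have hnt : Nontrivial α := Fintype.one_lt_card_iff_nontrivial.mp hcard
    have key : ∀ (h : Perm α), ncyc h = 1 → h.IsCycle ∧ h.support = Finset.univ := by
      intro h h1
      obtain ⟨u, v, huv⟩ := hnt.exists_pair_ne
      have hmov : ∃ x, h x ≠ x := by
        by_contra hc
        push_neg at hc
        exact huv (((sameCycle_fix (hc u) (sameCycle_all_of_ncyc_one h1 u v))).symm)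
      obtain ⟨x, hx⟩ := hmov
      refine ⟨⟨x, hx, fun y _ => sameCycle_all_of_ncyc_one h1 x y⟩, ?_⟩
      ext y
      simp only [Equiv.Perm.mem_support, Finset.mem_univ, iff_true]
      intro hy
      exact hx (sameCycle_fix hy (sameCycle_all_of_ncyc_one h1 y x) ▸ hy)
    obtain ⟨hfc, hfs⟩ := key f hf
    obtain ⟨hgc, hgs⟩ := key g hg
    exact hfc.isConj hgc (by rw [hfs, hgs])

lemma card_factorizations_conj (f g : Perm α) (h : IsConj f g) (r s : ℕ) :
    Nat.card {σ : Perm α × Perm α // σ.1 * σ.2 = f ∧ ncyc σ.1 = r ∧ ncyc σ.2 = s}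
      = Nat.card {σ : Perm α × Perm α // σ.1 * σ.2 = g ∧ ncyc σ.1 = r ∧ ncyc σ.2 = s} := by
  obtain ⟨u, hu⟩ := isConj_iff.mp h
  refine Nat.card_congr ?_
  refine
    { toFun := fun σ => ⟨(u * σ.1.1 * u⁻¹, u * σ.1.2 * u⁻¹), ?_, ?_, ?_⟩
      invFun := fun τ => ⟨(u⁻¹ * τ.1.1 * u, u⁻¹ * τ.1.2 * u), ?_, ?_, ?_⟩
      left_inv := ?_
      right_inv := ?_ }
  · obtain ⟨⟨σ1, σ2⟩, hp, h1, h2⟩ := σ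
    simp only
    rw [show (u * σ1 * u⁻¹) * (u * σ2 * u⁻¹) = u * (σ1 * σ2) * u⁻¹ by group, hp, hu]
  · obtain ⟨⟨σ1, σ2⟩, hp, h1, h2⟩ := σ
    simpa using (ncyc_conj u σ1).trans h1
  · obtain ⟨⟨σ1, σ2⟩, hp, h1, h2⟩ := σ
    simpa using (ncyc_conj u σ2).trans h2
  · obtain ⟨⟨τ1, τ2⟩, hp, h1, h2⟩ := τ
    simp only
    rw [show (u⁻¹ * τ1 * u) * (u⁻¹ * τ2 * u) = u⁻¹ * (τ1 * τ2) * u by group, hp, ← hu]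
    group
  · obtain ⟨⟨τ1, τ2⟩, hp, h1, h2⟩ := τ
    simpa using (by simpa using ncyc_conj u⁻¹ τ1 : ncyc (u⁻¹ * τ1 * u) = ncyc τ1).trans h1
  · obtain ⟨⟨τ1, τ2⟩, hp, h1, h2⟩ := τ
    simpa using (by simpa using ncyc_conj u⁻¹ τ2 : ncyc (u⁻¹ * τ2 * u) = ncyc τ2).trans h2
  · rintro ⟨⟨σ1, σ2⟩, hp, h1, h2⟩
    ext : 2 <;> simp <;> group
  · rintro ⟨⟨τ1, τ2⟩, hp, h1, h2⟩
    ext : 2 <;> simp <;> group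

end Conj

/-- Two-factor transitive factorizations of an `(n−1,1)`-cycle in `S_n` are `(n−1)`-to-one over
two-factor factorizations of an `(n−1)`-cycle in `S_{n−1}`, preserving cycle counts. -/
theorem two_factor_transitive_near_cycle (n : ℕ) (hn : 2 ≤ n)
    (ς' : Equiv.Perm (Fin n)) (m : Fin n) (hm : ς' m = m) (h2 : cycleCount ς' = 2)
    (ς'' : Equiv.Perm (Fin (n - 1))) (h1 : cycleCount ς'' = 1)
    (r s : ℕ) (hr : 1 ≤ r) (hs : 1 ≤ s) :
    Nat.card {π : Equiv.Perm (Fin n) × Equiv.Perm (Fin n) //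
        π.1 * π.2 = ς' ∧ cycleCount π.1 = r ∧ cycleCount π.2 = s ∧
          ∀ x y : Fin n, ∃ g ∈ Subgroup.closure {π.1, π.2}, g x = y}
      = (n - 1) * Nat.card {σ : Equiv.Perm (Fin (n - 1)) × Equiv.Perm (Fin (n - 1)) //
          σ.1 * σ.2 = ς'' ∧ cycleCount σ.1 = r ∧ cycleCount σ.2 = s} := by
  classical
  simp only [cycleCount_eq_ncyc] at h2 h1 ⊢
  have hcard : Fintype.card {x : Fin n // x ≠ m} = n - 1 := by
    simp [Fintype.card_subtype_compl]
  let e : {x : Fin n // x ≠ m} ≃ Fin (n - 1) := Fintype.equivFinOfCardEq hcard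
  set c' : Perm (Fin (n - 1)) := resP e ς' hm with hc'def
  have hrc := ncyc_resP e ς' hm
  have hc' : ncyc c' = 1 := by rw [hc'def]; omega
  have hcsub : ncyc (ς'.subtypePerm (p := fun x => x ≠ m) (ne_iff_of_fix hm)) = 1 := by
    have := ncyc_fixpoint ς' m hm
    omega
  -- transitivity characterization
  have keyT : ∀ π1 π2 : Perm (Fin n), π1 * π2 = ς' →
      ((∀ x y : Fin n, ∃ g ∈ Subgroup.closure {π1, π2}, g x = y) ↔ π2 m ≠ m) := by
    intro π1 π2 hp
    constructor
    · intro htrans hm2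
      have h1m : π1 m = m := by
        have h0 : (π1 * π2) m = m := by rw [hp, hm]
        rwa [Perm.mul_apply, hm2] at h0
      have hcard2 : 1 < Fintype.card (Fin n) := by simp; omega
      obtain ⟨y, hy⟩ := Fintype.exists_ne_of_one_lt_card hcard2 m
      obtain ⟨g, hg, hgm⟩ := htrans m y
      have hstab : g ∈ MulAction.stabilizer (Perm (Fin n)) m := by
        refine (Subgroup.closure_le _).mpr ?_ hg
        rintro f hf
        simp only [Set.mem_insert_iff, Set.mem_singleton_iff] at hf
        rcases hf with rfl | rfl
        · exact h1m
        · exact hm2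
      have hgmm : g m = m := hstab
      exact hy (by rw [← hgm]; exact hgmm)
    · intro hm2 x y
      have hπ1 : π1 ∈ Subgroup.closure {π1, π2} := Subgroup.subset_closure (by simp)
      have hπ2 : π2 ∈ Subgroup.closure {π1, π2} := Subgroup.subset_closure (by simp)
      have hcl : ς' ∈ Subgroup.closure {π1, π2} := hp ▸ mul_mem hπ1 hπ2
      have reach : ∀ z : Fin n, ∃ g ∈ Subgroup.closure {π1, π2}, g m = z := by
        intro z
        by_cases hz : z = m
        · exact ⟨1, one_mem _, by simp [hz]⟩
        · have hsc : ς'.SameCycle (π2 m) z :=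
            sameCycle_subtypePerm.mp
              (sameCycle_all_of_ncyc_one hcsub ⟨π2 m, hm2⟩ ⟨z, hz⟩)
          obtain ⟨k, hk⟩ := hsc
          exact ⟨ς' ^ k * π2, mul_mem (zpow_mem hcl k) hπ2, by rw [Perm.mul_apply]; exact hk⟩
      obtain ⟨gx, hgx, hgxm⟩ := reach x
      obtain ⟨gy, hgy, hgym⟩ := reach y
      refine ⟨gy * gx⁻¹, mul_mem hgy (inv_mem hgx), ?_⟩
      rw [Perm.mul_apply, ← hgxm, ← Perm.mul_apply gx⁻¹ gx m, inv_mul_cancel, Perm.one_apply, hgym]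
  rw [Nat.card_congr (Equiv.subtypeEquivRight
    (q := fun π : Perm (Fin n) × Perm (Fin n) =>
      π.1 * π.2 = ς' ∧ ncyc π.1 = r ∧ ncyc π.2 = s ∧ π.2 m ≠ m)
    (fun π => ⟨fun ⟨ha, hb, hc, hd⟩ => ⟨ha, hb, hc, (keyT _ _ ha).mp hd⟩,
               fun ⟨ha, hb, hc, hd⟩ => ⟨ha, hb, hc, (keyT _ _ ha).mpr hd⟩⟩))]
  have main : Nat.card {π : Perm (Fin n) × Perm (Fin n) //
        π.1 * π.2 = ς' ∧ ncyc π.1 = r ∧ ncyc π.2 = s ∧ π.2 m ≠ m}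
      = Nat.card ({x : Fin n // x ≠ m} ×
          {σ : Perm (Fin (n - 1)) × Perm (Fin (n - 1)) //
            σ.1 * σ.2 = c' ∧ ncyc σ.1 = r ∧ ncyc σ.2 = s}) := by
    refine Nat.card_congr ?_
    refine
      { toFun := fun ⟨⟨π1, π2⟩, hp, hcr, hcs, hm2⟩ =>
          ⟨⟨π2 m, hm2⟩,
            ⟨(resP e (π1 * Equiv.swap m (π2 m))
                (by rw [Perm.mul_apply, Equiv.swap_apply_left, ← Perm.mul_apply, hp, hm]),
              resP e (Equiv.swap m (π2 m) * π2)
                (by rw [Perm.mul_apply, Equiv.swap_apply_right])),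
              ?prodB, ?rB, ?sB⟩⟩
        invFun := fun ⟨⟨a, ha⟩, ⟨⟨σ1, σ2⟩, hp, hcr, hcs⟩⟩ =>
          ⟨(extP e σ1 * Equiv.swap m a, Equiv.swap m a * extP e σ2), ?prodA, ?rA, ?sA, ?mA⟩
        left_inv := ?linv
        right_inv := ?rinv }
    case prodB =>
      apply extP_injective e
      rw [extP_mul, ext_res, ext_res, hc'def, ext_res]
      rw [mul_assoc, ← mul_assoc (Equiv.swap m (π2 m)), Equiv.swap_mul_self, one_mul, hp]
    case rB =>
      have hA : ncyc (π1 * Equiv.swap m (π2 m)) = r + 1 := by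
        rw [ncyc_mul_swap hm2 (show π1 (π2 m) = m by rw [← Perm.mul_apply, hp, hm]), hcr]
      have hB := (ncyc_resP e (π1 * Equiv.swap m (π2 m))
        (by rw [Perm.mul_apply, Equiv.swap_apply_left, ← Perm.mul_apply, hp, hm])).symm.trans hA
      exact Nat.succ_injective hB
    case sB =>
      have hA : ncyc (Equiv.swap m (π2 m) * π2) = s + 1 := by
        rw [ncyc_swap_mul hm2 rfl, hcs]
      have hB := (ncyc_resP e (Equiv.swap m (π2 m) * π2)
        (by rw [Perm.mul_apply, Equiv.swap_apply_right])).symm.trans hA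
      exact Nat.succ_injective hB
    case prodA =>
      rw [mul_assoc, ← mul_assoc (Equiv.swap m a), Equiv.swap_mul_self, one_mul, ← extP_mul,
        hp, hc'def, ext_res]
    case rA =>
      dsimp only
      have h5 : ncyc ((extP e σ1 * Equiv.swap m a) * Equiv.swap m a)
          = ncyc (extP e σ1 * Equiv.swap m a) + 1 :=
        ncyc_mul_swap ha (show (extP e σ1 * Equiv.swap m a) a = m by
          rw [Perm.mul_apply, Equiv.swap_apply_right, extP_fix])
      rw [show (extP e σ1 * Equiv.swap m a) * Equiv.swap m a = extP e σ1 by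
        rw [mul_assoc, Equiv.swap_mul_self, mul_one]] at h5
      have h6 : ncyc (extP e σ1) = r + 1 := by rw [ncyc_extP, hcr]
      omega
    case sA =>
      dsimp only
      have h5 : ncyc (Equiv.swap m a * (Equiv.swap m a * extP e σ2))
          = ncyc (Equiv.swap m a * extP e σ2) + 1 :=
        ncyc_swap_mul ha (show (Equiv.swap m a * extP e σ2) m = a by
          rw [Perm.mul_apply, extP_fix, Equiv.swap_apply_left])
      rw [show Equiv.swap m a * (Equiv.swap m a * extP e σ2) = extP e σ2 by
        rw [← mul_assoc, Equiv.swap_mul_self, one_mul]] at h5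
      have h6 : ncyc (extP e σ2) = s + 1 := by rw [ncyc_extP, hcs]
      omega
    case mA =>
      rw [Perm.mul_apply, extP_fix, Equiv.swap_apply_left]
      exact ha
    case linv =>
      rintro ⟨⟨π1, π2⟩, hp, hcr, hcs, hm2⟩
      apply Subtype.ext
      dsimp only
      rw [ext_res, ext_res]
      refine Prod.ext ?_ ?_
      · rw [mul_assoc, Equiv.swap_mul_self, mul_one]
      · rw [← mul_assoc, Equiv.swap_mul_self, one_mul]
    case rinv =>
      rintro ⟨⟨a, ha⟩, ⟨⟨σ1, σ2⟩, hp, hcr, hcs⟩⟩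
      have hval : (Equiv.swap m a * extP e σ2) m = a := by
        rw [Perm.mul_apply, extP_fix, Equiv.swap_apply_left]
      refine Prod.ext (Subtype.ext ?_) (Subtype.ext ?_)
      · exact hval
      · dsimp only
        refine Prod.ext ?_ ?_
        · refine (resP_congr e ?_ ?_ (extP_fix e σ1)).trans (res_ext e σ1)
          · rw [hval, mul_assoc, Equiv.swap_mul_self, mul_one]
          · rw [hval, mul_assoc, Equiv.swap_mul_self, mul_one, extP_fix]
        · refine (resP_congr e ?_ ?_ (extP_fix e σ2)).trans (res_ext e σ2)
          · rw [hval, ← mul_assoc, Equiv.swap_mul_self, one_mul]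
          · rw [hval, ← mul_assoc, Equiv.swap_mul_self, one_mul, extP_fix]
  rw [main, Nat.card_prod]
  have hs1 : Nat.card {x : Fin n // x ≠ m} = n - 1 := by
    rw [Nat.card_eq_fintype_card, hcard]
  rw [hs1, card_factorizations_conj c' ς'' (isConj_of_ncyc_one hc' h1) r s]
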